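/- Let n be a positive integer, let S = [[λ, μ], [conj(μ), conj(λ)]] be a complex symplectic 2n×2n matrix of this block form (Sᵀ J S = J with J = [[0, I], [−I, 0]]), and let A be a complex symmetric n×n matrix with I − AᴴA positive definite. Set Λ = (I − AᴴA)^{−1/2}, Λ̄ = (I − AAᴴ)^{−1/2}, and ι(A) = [[Λ, AᴴΛ̄], [AΛ, Λ̄]]. Then λ + μA is invertible, the product S·ι(A) again has invertible upper-left block, and h(S·ι(A)) = (conj(λ)A + conj(μ))(μA + λ)⁻¹, where h applied to a block matrix [[a, b], [c, d]] with a invertible means c·a⁻¹. -/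

import Mathlib

open Matrix
open scoped ComplexOrder

/-- For `S = [[λ, μ], [conj μ, conj λ]]` complex symplectic and `A` complex
symmetric with `I − AᴴA` positive definite, with `ι(A) = [[Λ, AᴴΛ̄], [AΛ, Λ̄]]` built from
the positive definite inverse square roots `Λ = (I − AᴴA)^{−1/2}`, `Λ̄ = (I − AAᴴ)^{−1/2}`,
the matrix `λ + μA` is invertible, the upper-left block of `S·ι(A)` is invertible, and
`h(S·ι(A)) = (conj(λ)A + conj(μ))(μA + λ)⁻¹` where `h([[a,b],[c,d]]) = c·a⁻¹`. -/
theorem h_of_S_mul_iota (n : ℕ) (hn : 0 < n)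
    (lam mu A Lam Lamb : Matrix (Fin n) (Fin n) ℂ)
    (hS : (fromBlocks lam mu (mu.map (starRingEnd ℂ)) (lam.map (starRingEnd ℂ)))ᵀ *
        fromBlocks (0 : Matrix (Fin n) (Fin n) ℂ) (1 : Matrix (Fin n) (Fin n) ℂ)
          (-1 : Matrix (Fin n) (Fin n) ℂ) (0 : Matrix (Fin n) (Fin n) ℂ) *
        fromBlocks lam mu (mu.map (starRingEnd ℂ)) (lam.map (starRingEnd ℂ)) =
      fromBlocks (0 : Matrix (Fin n) (Fin n) ℂ) (1 : Matrix (Fin n) (Fin n) ℂ)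
        (-1 : Matrix (Fin n) (Fin n) ℂ) (0 : Matrix (Fin n) (Fin n) ℂ))
    (hA : Aᵀ = A) (hApd : ((1 : Matrix (Fin n) (Fin n) ℂ) - Aᴴ * A).PosDef)
    (hLam : Lam.PosDef)
    (hLamSq : Lam * Lam * ((1 : Matrix (Fin n) (Fin n) ℂ) - Aᴴ * A) = 1)
    (hLamb : Lamb.PosDef)
    (hLambSq : Lamb * Lamb * ((1 : Matrix (Fin n) (Fin n) ℂ) - A * Aᴴ) = 1) :
    IsUnit (lam + mu * A) ∧
    IsUnit ((fromBlocks lam mu (mu.map (starRingEnd ℂ)) (lam.map (starRingEnd ℂ)) *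
      fromBlocks Lam (Aᴴ * Lamb) (A * Lam) Lamb).toBlocks₁₁) ∧
    (fromBlocks lam mu (mu.map (starRingEnd ℂ)) (lam.map (starRingEnd ℂ)) *
        fromBlocks Lam (Aᴴ * Lamb) (A * Lam) Lamb).toBlocks₂₁ *
      ((fromBlocks lam mu (mu.map (starRingEnd ℂ)) (lam.map (starRingEnd ℂ)) *
        fromBlocks Lam (Aᴴ * Lamb) (A * Lam) Lamb).toBlocks₁₁)⁻¹ =
      (lam.map (starRingEnd ℂ) * A + mu.map (starRingEnd ℂ)) * (mu * A + lam)⁻¹ := by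
  set lc : Matrix (Fin n) (Fin n) ℂ := lam.map (starRingEnd ℂ) with hlc
  set mc : Matrix (Fin n) (Fin n) ℂ := mu.map (starRingEnd ℂ) with hmc
  -- extract the block relations from the symplectic condition
  simp only [fromBlocks_transpose, fromBlocks_multiply, Matrix.mul_zero, Matrix.zero_mul,
    Matrix.mul_one, Matrix.one_mul, Matrix.mul_neg, Matrix.neg_mul, add_zero, zero_add] at hS
  have h11 := congrArg Matrix.toBlocks₁₁ hS
  have h12 := congrArg Matrix.toBlocks₁₂ hS
  have h21 := congrArg Matrix.toBlocks₂₁ hS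
  have h22 := congrArg Matrix.toBlocks₂₂ hS
  simp only [toBlocks_fromBlocks₁₁, toBlocks_fromBlocks₁₂, toBlocks_fromBlocks₂₁,
    toBlocks_fromBlocks₂₂] at h11 h12 h21 h22
  -- h11 : -(mcᵀ * lam) + lamᵀ * mc = 0
  -- h12 : -(mcᵀ * mu) + lamᵀ * lc = 1
  -- h21 : -(lcᵀ * lam) + muᵀ * mc = -1
  -- h22 : -(lcᵀ * mu) + muᵀ * lc = 0
  have t1 : mcᵀ * lam - lamᵀ * mc = 0 := by
    rw [← neg_eq_zero, ← h11]; abel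
  have t2 : mcᵀ * mu - lamᵀ * lc + 1 = 0 := by
    rw [← h12]; abel
  have t3 : lcᵀ * lam - muᵀ * mc - 1 = 0 := by
    rw [show (1 : Matrix (Fin n) (Fin n) ℂ) = -(-1 : Matrix (Fin n) (Fin n) ℂ) by simp, ← h21]
    abel
  have t4 : lcᵀ * mu - muᵀ * lc = 0 := by
    rw [← neg_eq_zero, ← h22]; abel
  -- the key matrix identity Bᴴ B − Cᴴ C = 1 − Aᴴ A
  set B : Matrix (Fin n) (Fin n) ℂ := lam + mu * A with hB
  set C : Matrix (Fin n) (Fin n) ℂ := mc + lc * A with hC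
  have hBH : Bᴴ = lcᵀ + Aᴴ * mcᵀ := by
    rw [hB, conjTranspose_add, conjTranspose_mul]; rfl
  have hmcH : mcᴴ = muᵀ := by
    ext i j; simp [hmc, conjTranspose_apply]
  have hlcH : lcᴴ = lamᵀ := by
    ext i j; simp [hlc, conjTranspose_apply]
  have hCH : Cᴴ = muᵀ + Aᴴ * lamᵀ := by
    rw [hC, conjTranspose_add, conjTranspose_mul, hmcH, hlcH]
  have key : Bᴴ * B - Cᴴ * C = 1 - Aᴴ * A := by
    rw [← sub_eq_zero, hBH, hCH, hB, hC]
    have expand :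
        (lcᵀ + Aᴴ * mcᵀ) * (lam + mu * A) - (muᵀ + Aᴴ * lamᵀ) * (mc + lc * A) -
          (1 - Aᴴ * A) =
        (lcᵀ * lam - muᵀ * mc - 1) + (lcᵀ * mu - muᵀ * lc) * A +
          Aᴴ * (mcᵀ * lam - lamᵀ * mc) + Aᴴ * (mcᵀ * mu - lamᵀ * lc + 1) * A := by
      noncomm_ring
    rw [expand, t1, t2, t3, t4]
    simp
  -- invertibility of B = lam + mu * A
  have hBunit : IsUnit B := by
    rw [Matrix.isUnit_iff_isUnit_det, isUnit_iff_ne_zero]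
    intro h0
    obtain ⟨v, hv, hBv⟩ := Matrix.exists_mulVec_eq_zero_iff.mpr h0
    have hpos := hApd.dotProduct_mulVec_pos hv
    have hval : star v ⬝ᵥ ((1 - Aᴴ * A) *ᵥ v) = -(star v ⬝ᵥ ((Cᴴ * C) *ᵥ v)) := by
      rw [← key, Matrix.sub_mulVec, dotProduct_sub, ← Matrix.mulVec_mulVec, hBv,
        Matrix.mulVec_zero, dotProduct_zero, zero_sub]
    have hnn : 0 ≤ star v ⬝ᵥ ((Cᴴ * C) *ᵥ v) := (Matrix.posSemidef_conjTranspose_mul_self C).dotProduct_mulVec_nonneg v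
    have hle : star v ⬝ᵥ ((1 - Aᴴ * A) *ᵥ v) ≤ 0 := by
      rw [hval]; exact neg_nonpos.mpr hnn
    exact absurd (hpos.trans_le hle) (lt_irrefl _)
  have hLamUnit : IsUnit Lam := hLam.isUnit
  -- blocks of the product
  have hblocks : (fromBlocks lam mu mc lc * fromBlocks Lam (Aᴴ * Lamb) (A * Lam) Lamb) =
      fromBlocks (B * Lam) (lam * (Aᴴ * Lamb) + mu * Lamb)
        (C * Lam) (mc * (Aᴴ * Lamb) + lc * Lamb) := by
    rw [fromBlocks_multiply, hB, hC]
    congr 1 <;> noncomm_ring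
  refine ⟨hBunit, ?_, ?_⟩
  · rw [hblocks, toBlocks_fromBlocks₁₁]
    exact hBunit.mul hLamUnit
  · rw [hblocks, toBlocks_fromBlocks₂₁, toBlocks_fromBlocks₁₁,
      Matrix.mul_inv_rev, show mu * A + lam = B by rw [hB]; abel,
      show lc * A + mc = C by rw [hC]; abel]
    rw [Matrix.mul_assoc C Lam, ← Matrix.mul_assoc Lam,
      Matrix.mul_nonsing_inv _ (Matrix.isUnit_iff_isUnit_det _ |>.mp hLamUnit),
      Matrix.one_mul]
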